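/- arXiv:2106.06861 — 6 statements merged into one kernel-verified Lean document; each statement's English description precedes it below -/
import Mathlib

section
/- Let a, b ∈ ℚ be such that the Weierstrass curve Γ_{a,b} : y² = x³ + a·x² + b·x is nonsingular and the torsion subgroup of its group of ℚ-rational points is isomorphic to ℤ/12ℤ. Then there exists t ∈ ℚ with t > 0 such that Γ_{a,b} is isomorphic over ℚ (i.e. related by an admissible Weierstrass change of variables) to the curve Γ_{a₁,b₁} : y² = x³ + a₁·x² + b₁·x, where a₁ = 2·(3t⁸ + 24t⁶ + 6t⁴ − 1) and b₁ = (t² − 1)⁶·(1 + 3t²)². -/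
/-- The Weierstrass curve `y² = x³ + a·x² + b·x` over a field `F`. -/
def Gamma {F : Type} [Field F] (a b : F) : WeierstrassCurve.Affine F :=
  { a₁ := 0, a₂ := a, a₃ := 0, a₄ := b, a₆ := 0 }

open WeierstrassCurve.Affine WeierstrassCurve

lemma partB (a b d e x₀ y₀ : ℚ) (hd : d ≠ 0) (he : e ≠ 0) (hx : x₀ ≠ 0) (hy : y₀ ≠ 0)
    (hb : b = d^2) (ha : a = e^2 - 2*d)
    (h3 : 3*x₀^4 + 4*a*x₀^3 + 6*b*x₀^2 - b^2 = 0)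
    (h4 : y₀^2 = x₀^3 + a*x₀^2 + b*x₀) :
    ∃ t : ℚ, 0 < t ∧ ∃ u : ℚ, u ≠ 0 ∧
      a = u^2 * (2*(3*t^8+24*t^6+6*t^4-1)) ∧
      b = u^4 * ((t^2-1)^6*(1+3*t^2)^2) := by
  subst hb ha
  have Hw : 4*x₀^3*e^2 = -((x₀-d)^3*(3*x₀+d)) := by linear_combination h3
  have hlhs : 4*x₀^3*e^2 ≠ 0 := by positivity
  have hxd : x₀ - d ≠ 0 := by
    intro h0; rw [Hw, h0] at hlhs; simp at hlhs
  have h31 : 3*x₀ + d ≠ 0 := by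
    intro h0; rw [Hw, h0] at hlhs; simp at hlhs
  have Hy : 4*x₀*y₀^2 = (x₀-d)^2*(x₀+d)^2 := by linear_combination 4*x₀*h4 + Hw
  have hxd2 : x₀ + d ≠ 0 := by
    intro h0
    have h' : 4*x₀*y₀^2 ≠ 0 := by positivity
    rw [Hy, h0] at h'; simp at h'
  obtain ⟨s, hs⟩ : ∃ s : ℚ, s^2*d^2 = (d-x₀)*(d+3*x₀) := by
    refine ⟨4*e*y₀*x₀^2/(d*(x₀-d)^2*(x₀+d)), ?_⟩
    rw [div_pow, div_mul_eq_mul_div,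
      div_eq_iff (pow_ne_zero 2 (mul_ne_zero (mul_ne_zero hd (pow_ne_zero 2 hxd)) hxd2))]
    linear_combination (4*e^2*x₀^3*d^2)*Hy + (d^2*(x₀-d)^2*(x₀+d)^2)*Hw
  have hM : 3*x₀ - s*d + d ≠ 0 := by
    intro hM0
    have h40 : (3*x₀+d)*(4*x₀) = 0 := by
      linear_combination hs + (s*d + 3*x₀ + d)*hM0
    rcases mul_eq_zero.mp h40 with h | h
    · exact h31 h
    · exact hx (by linarith)
  have hN : s*d - d + x₀ ≠ 0 := by
    intro hN0
    have h40 : (x₀ - d)*(4*x₀) = 0 := by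
      linear_combination hs - (s*d + d - x₀)*hN0
    rcases mul_eq_zero.mp h40 with h | h
    · exact hxd h
    · exact hx (by linarith)
  have hA : 3*x₀^2 + (s*d-d)^2 = 2*d*(x₀ - s*d + d) := by linear_combination hs
  have hB : (x₀-d)*(3*x₀^2+(s*d-d)^2) = -(d*(s*d-d+x₀)^2) := by linear_combination x₀*hs
  have hC : (3*x₀+d)*(3*x₀^2+(s*d-d)^2) = d*(3*x₀-s*d+d)^2 := by linear_combination (3*x₀)*hs
  have key3 : d^3*(32*e^2*x₀^3*(x₀-s*d+d)^3*(3*x₀^2+(s*d-d)^2))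
      = d^3*((s*d-d+x₀)^6*d*(3*x₀-s*d+d)^2) := by
    calc d^3*(32*e^2*x₀^3*(x₀-s*d+d)^3*(3*x₀^2+(s*d-d)^2))
        = 4*x₀^3*e^2*(2*d*(x₀-s*d+d))^3*(3*x₀^2+(s*d-d)^2) := by ring
      _ = 4*x₀^3*e^2*(3*x₀^2+(s*d-d)^2)^3*(3*x₀^2+(s*d-d)^2) := by rw [← hA]
      _ = -(((x₀-d)*(3*x₀^2+(s*d-d)^2))^3*((3*x₀+d)*(3*x₀^2+(s*d-d)^2))) := by
          linear_combination ((3*x₀^2+(s*d-d)^2)^4)*Hw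
      _ = -((-(d*(s*d-d+x₀)^2))^3*((3*x₀+d)*(3*x₀^2+(s*d-d)^2))) := by rw [hB]
      _ = (d*(s*d-d+x₀)^2)^3*((3*x₀+d)*(3*x₀^2+(s*d-d)^2)) := by ring
      _ = (d*(s*d-d+x₀)^2)^3*(d*(3*x₀-s*d+d)^2) := by rw [hC]
      _ = d^3*((s*d-d+x₀)^6*d*(3*x₀-s*d+d)^2) := by ring
  have key : 32*e^2*x₀^3*(x₀-s*d+d)^3*(3*x₀^2+(s*d-d)^2)
      = (s*d-d+x₀)^6*d*(3*x₀-s*d+d)^2 :=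
    mul_left_cancel₀ (pow_ne_zero 3 hd) key3
  obtain ⟨N, hNdef⟩ : ∃ N : ℚ, N = s*d - d + x₀ := ⟨_, rfl⟩
  obtain ⟨M, hMdef⟩ : ∃ M : ℚ, M = 3*x₀ - s*d + d := ⟨_, rfl⟩
  have hN' : N ≠ 0 := hNdef ▸ hN
  have hM' : M ≠ 0 := hMdef ▸ hM
  have K1 : e^2*(M^2-N^2)^3*(M^2+3*N^2) = 64*N^6*d*M^2 := by
    rw [hNdef, hMdef]
    linear_combination 64*key
  obtain ⟨T, hTNM⟩ : ∃ T : ℚ, T*M = N := ⟨N/M, div_mul_cancel₀ _ hM'⟩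
  have hT0 : T ≠ 0 := by
    intro h0; rw [h0, zero_mul] at hTNM; exact hN' hTNM.symm
  have e3 : M^2*(1-T^2) = M^2 - N^2 := by linear_combination (-(T*M)-N)*hTNM
  have e4 : M^2*(1+3*T^2) = M^2 + 3*N^2 := by linear_combination 3*(T*M+N)*hTNM
  have e5 : M^2*T^2 = N^2 := by linear_combination (T*M+N)*hTNM
  have K1T8 : M^8*(e^2*(1-T^2)^3*(1+3*T^2)) = M^8*(64*T^6*d) := by
    linear_combination K1 + (e^2*(M^2*(1-T^2))^3)*e4
      + (e^2*(M^2+3*N^2)*((M^2*(1-T^2))^2 + (M^2*(1-T^2))*(M^2-N^2) + (M^2-N^2)^2))*e3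
      - (64*d*M^2*((M^2*T^2)^2 + M^2*T^2*N^2 + N^4))*e5
  have K1T : e^2*(1-T^2)^3*(1+3*T^2) = 64*T^6*d :=
    mul_left_cancel₀ (pow_ne_zero 8 hM') K1T8
  refine ⟨|T|, abs_pos.mpr hT0, e/(8*T^3), by positivity, ?_, ?_⟩
  · have h8 : |T|^8 = T^8 := by rw [show |T|^8 = (|T|^2)^4 by ring, sq_abs]; ring
    have h6 : |T|^6 = T^6 := by rw [show |T|^6 = (|T|^2)^3 by ring, sq_abs]; ring
    have h4' : |T|^4 = T^4 := by rw [show |T|^4 = (|T|^2)^2 by ring, sq_abs]; ring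
    rw [h8, h6, h4']
    field_simp
    linear_combination 2*K1T
  · have h2 : |T|^2 = T^2 := sq_abs T
    rw [h2]
    field_simp
    linear_combination (-(e^2*(1-T^2)^3*(1+3*T^2) + 64*T^6*d))*K1T


/-- every nonsingular curve `y² = x³ + ax² + bx` over `ℚ` with torsion
group `ℤ/12ℤ` is related by an admissible change of variables to `y² = x³ + a₁x² + b₁x`
with `a₁ = 2(3t⁸ + 24t⁶ + 6t⁴ − 1)`, `b₁ = (t² − 1)⁶(1 + 3t²)²` for some positive
rational `t`. -/
theorem stmt7 (a b : ℚ) (hΔ : (Gamma a b).Δ ≠ 0)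
    (htor : Nonempty (AddCommGroup.torsion (Gamma a b).toAffine.Point ≃+ ZMod 12)) :
    ∃ t : ℚ, 0 < t ∧ ∃ C : WeierstrassCurve.VariableChange ℚ,
      C • (Gamma a b) =
        Gamma (2 * (3 * t ^ 8 + 24 * t ^ 6 + 6 * t ^ 4 - 1))
          ((t ^ 2 - 1) ^ 6 * (1 + 3 * t ^ 2) ^ 2) := by
  obtain ⟨φ⟩ := htor
  -- discriminant
  have hΔval : (Gamma a b).Δ = 16*b^2*(a^2-4*b) := by
    simp only [Gamma, WeierstrassCurve.Δ, WeierstrassCurve.b₂, WeierstrassCurve.b₄,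
      WeierstrassCurve.b₆, WeierstrassCurve.b₈]
    ring
  have hbne : b ≠ 0 := by
    intro h0; rw [hΔval, h0] at hΔ; simp at hΔ
  -- the 2-torsion point (0,0)
  have hTeq : (Gamma a b).toAffine.Equation 0 0 := by
    simp [Gamma, equation_iff]
  have hTns : (Gamma a b).toAffine.Nonsingular 0 0 :=
    ((Gamma a b).toAffine.equation_iff_nonsingular_of_Δ_ne_zero hΔ).mp hTeq
  set TT : (Gamma a b).toAffine.Point := .some _ _ hTns with hTTdef
  have hnegY00 : (Gamma a b).toAffine.negY 0 0 = 0 := by simp [Gamma, negY]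
  have hTT2 : TT + TT = 0 := Point.add_self_of_Y_eq hnegY00.symm
  have hTTne : TT ≠ 0 := Point.some_ne_zero hTns
  -- generator of torsion
  set g : AddCommGroup.torsion (Gamma a b).toAffine.Point := φ.symm 1 with hgdef
  have hgord : addOrderOf g = 12 := by
    have h1 := AddEquiv.addOrderOf_eq φ (φ.symm 1)
    rw [AddEquiv.apply_symm_apply, ZMod.addOrderOf_one] at h1
    rw [hgdef, ← h1]
  set P : (Gamma a b).toAffine.Point := (g : (Gamma a b).toAffine.Point) with hPdef
  have hPord : addOrderOf P = 12 := by
    rw [hPdef, AddSubgroup.addOrderOf_coe, hgord]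
  have hTTmem : TT ∈ AddCommGroup.torsion (Gamma a b).toAffine.Point := by
    rw [AddCommGroup.mem_torsion, isOfFinAddOrder_iff_nsmul_eq_zero]
    exact ⟨2, by norm_num, by rw [two_nsmul]; exact hTT2⟩
  have h6P : (6:ℕ) • P = TT := by
    have h2x : (2:ℕ) • φ ⟨TT, hTTmem⟩ = 0 := by
      rw [← map_nsmul]
      convert map_zero φ using 2
      ext
      push_cast [two_nsmul]
      exact hTT2
    have hxne : φ ⟨TT, hTTmem⟩ ≠ 0 := by
      intro h0
      apply hTTne
      have := φ.injective (h0.trans (map_zero φ).symm)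
      exact congrArg Subtype.val this
    have hx6 : φ ⟨TT, hTTmem⟩ = 6 := by
      revert h2x hxne
      generalize φ ⟨TT, hTTmem⟩ = z
      revert z; decide
    have : (⟨TT, hTTmem⟩ : AddCommGroup.torsion (Gamma a b).toAffine.Point) = (6:ℕ) • g := by
      have h61 : (6:ℕ) • (1 : ZMod 12) = 6 := by decide
      rw [hgdef, ← map_nsmul φ.symm, h61, ← hx6, AddEquiv.symm_apply_apply]
    have := congrArg Subtype.val this
    simp only [AddSubgroup.coe_nsmul] at this
    rw [hPdef, ← this]
  -- Q = 3P, doubling to TT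
  set Q : (toAffine (Gamma a b)).Point := (3:ℕ) • P with hQdef
  have hQQ : Q + Q = TT := by
    rw [hQdef, ← h6P, ← add_nsmul]
  have hQne0 : Q ≠ 0 := by
    rw [hQdef]
    intro h0
    have := addOrderOf_dvd_iff_nsmul_eq_zero.mpr h0
    rw [hPord] at this
    norm_num at this
  rcases hQrep : Q with _ | @⟨xQ, yQ, hQns⟩
  · exact absurd hQrep hQne0
  · rw [hQrep] at hQQ
    have hyQnegY : yQ ≠ (toAffine (Gamma a b)).negY xQ yQ := by
      intro heq
      rw [Point.add_self_of_Y_eq heq] at hQQ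
      exact hTTne hQQ.symm
    have hyQ0 : yQ ≠ 0 := by
      intro h0
      apply hyQnegY
      simp [Gamma, negY, h0]
    rw [Point.add_self_of_Y_ne hyQnegY, hTTdef] at hQQ
    have hxadd := (cast (Point.some.injEq ..) hQQ).1
    have hslope : (toAffine (Gamma a b)).slope xQ xQ yQ yQ = (3*xQ^2+2*a*xQ+b)/(2*yQ) := by
      rw [slope_of_Y_ne rfl hyQnegY]
      simp [Gamma, negY]
      ring_nf
    have heqQ : yQ^2 = xQ^3 + a*xQ^2 + b*xQ := by
      have := (equation_iff _ _).mp hQns.1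
      simp only [Gamma] at this
      linear_combination this
    have hxadd' : (3*xQ^2+2*a*xQ+b)^2 = (a + 2*xQ)*(2*yQ)^2 := by
      simp only [addX] at hxadd
      rw [hslope] at hxadd
      simp only [Gamma] at hxadd
      field_simp at hxadd
      linear_combination hxadd
    have hbd : b = xQ^2 := by
      have hsq : (xQ^2 - b)^2 = 0 := by
        linear_combination hxadd' + 4*(a+2*xQ)*heqQ
      have h0 := pow_eq_zero_iff (n := 2) (by norm_num) |>.mp hsq
      linarith [h0]
    have hdne : xQ ≠ 0 := by
      intro h0; rw [h0] at hbd; simp at hbd; exact hbne hbd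
    have hae : a = (yQ/xQ)^2 - 2*xQ := by
      field_simp
      linear_combination -heqQ - xQ*hbd
    -- R = 4P, point of order 3
    have hR12 : ((4:ℕ) • P) + ((4:ℕ) • P) + ((4:ℕ) • P) = 0 := by
      rw [← add_nsmul, ← add_nsmul]
      exact addOrderOf_dvd_iff_nsmul_eq_zero.mp (by rw [hPord])
    have hRne0 : (4:ℕ) • P ≠ 0 := by
      intro h0
      have := addOrderOf_dvd_iff_nsmul_eq_zero.mpr h0
      rw [hPord] at this
      norm_num at this
    rcases hRrep : (4:ℕ) • P with _ | @⟨x₀, y₀, hRns⟩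
    · exact absurd hRrep hRne0
    · rw [hRrep] at hR12 hRne0
      have hyRnegY : y₀ ≠ (toAffine (Gamma a b)).negY x₀ y₀ := by
        intro heq
        rw [Point.add_self_of_Y_eq heq, zero_add] at hR12
        exact hRne0 hR12
      have hyR0 : y₀ ≠ 0 := by
        intro h0
        apply hyRnegY
        simp [Gamma, negY, h0]
      have heqR : y₀^2 = x₀^3 + a*x₀^2 + b*x₀ := by
        have := (equation_iff _ _).mp hRns.1
        simp only [Gamma] at this
        linear_combination this
      have hxR0 : x₀ ≠ 0 := by
        intro h0
        apply hyR0
        have : y₀^2 = 0 := by rw [heqR, h0]; ring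
        exact pow_eq_zero_iff (n := 2) (by norm_num) |>.mp this
      have h2R : Point.some _ _ hRns + Point.some _ _ hRns = -Point.some _ _ hRns :=
        add_eq_zero_iff_eq_neg.mp hR12
      rw [Point.add_self_of_Y_ne hyRnegY, Point.neg_some, Point.some.injEq] at h2R
      have hslopeR : (toAffine (Gamma a b)).slope x₀ x₀ y₀ y₀ = (3*x₀^2+2*a*x₀+b)/(2*y₀) := by
        rw [slope_of_Y_ne rfl hyRnegY]
        simp [Gamma, negY]
        ring_nf
      have hxadd3 := h2R.1
      simp only [addX] at hxadd3
      rw [hslopeR] at hxadd3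
      simp only [Gamma] at hxadd3
      field_simp at hxadd3
      have h3 : 3*x₀^4 + 4*a*x₀^3 + 6*b*x₀^2 - b^2 = 0 := by
        linear_combination -hxadd3 - 4*(a+3*x₀)*heqR
      obtain ⟨t, htpos, u, hu, haf, hbf⟩ :=
        partB a b xQ (yQ/xQ) x₀ y₀ hdne (div_ne_zero hyQ0 hdne) hxR0 hyR0 hbd hae h3 heqR
      refine ⟨t, htpos, ⟨Units.mk0 u hu, 0, 0, 0⟩, ?_⟩
      have hvc : (⟨Units.mk0 u hu, 0, 0, 0⟩ : VariableChange ℚ) • (Gamma a b)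
          = Gamma (u⁻¹^2*a) (u⁻¹^4*b) := by
        ext <;> simp [WeierstrassCurve.variableChange_def, Gamma]
      rw [hvc, haf, hbf]
      have hGamma : ∀ (A B A' B' : ℚ), A = A' → B = B' → Gamma A B = Gamma A' B' := by
        intro A B A' B' h1 h2
        rw [h1, h2]
      apply hGamma <;> field_simp
end

section
/- Let t ∈ ℚ with t > 0 and t ≠ 1, and let Γ_t be the Weierstrass curve y² = x³ + a₁·x² + b₁·x over ℚ with a₁ = 2·(3t⁸ + 24t⁶ + 6t⁴ − 1) and b₁ = (t² − 1)⁶·(1 + 3t²)². Then: (i) the point (0, 0) lies on Γ_t and has order 2; (ii) the point ((t² − 1)⁴, 4t²·(t² − 1)⁴·(t² + 1)) lies on Γ_t and has order 3; (iii) the point (−(t² − 1)³·(1 + 3t²), 8t³·(t² − 1)³·(1 + 3t²)) lies on Γ_t and has order 4; (iv) the point ((t² − 1)²·(1 + 3t²)², 4t²·(t² − 1)²·(t² + 1)·(1 + 3t²)²) lies on Γ_t and has order 6. -/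
open WeierstrassCurve.Affine WeierstrassCurve.Affine.Point

lemma some_eq_some' {F : Type} [Field F] {W : WeierstrassCurve.Affine F} {x1 y1 x2 y2 : F}
    (hx : x1 = x2) (hy : y1 = y2) (h : W.Nonsingular x1 y1) (h' : W.Nonsingular x2 y2) :
    Point.some _ _ h = Point.some _ _ h' := by subst hx; subst hy; rfl

/-- on the curve `Γ_t : y² = x³ + a₁x² + b₁x` with
`a₁ = 2(3t⁸ + 24t⁶ + 6t⁴ − 1)` and `b₁ = (t² − 1)⁶(1 + 3t²)²`, `t ∈ ℚ`, `t > 0`, `t ≠ 1`: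
(i) `(0,0)` is a point of order 2; (ii) `((t²−1)⁴, 4t²(t²−1)⁴(t²+1))` is a point of
order 3; (iii) `(−(t²−1)³(1+3t²), 8t³(t²−1)³(1+3t²))` is a point of order 4;
(iv) `((t²−1)²(1+3t²)², 4t²(t²−1)²(t²+1)(1+3t²)²)` is a point of order 6. -/
theorem stmt9 (t : ℚ) (ht : 0 < t) (ht1 : t ≠ 1) :
    let a₁ : ℚ := 2 * (3 * t ^ 8 + 24 * t ^ 6 + 6 * t ^ 4 - 1)
    let b₁ : ℚ := (t ^ 2 - 1) ^ 6 * (1 + 3 * t ^ 2) ^ 2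
    let W : WeierstrassCurve.Affine ℚ := Gamma a₁ b₁
    (W.Nonsingular 0 0 ∧
      ∀ h : W.Nonsingular 0 0, addOrderOf (WeierstrassCurve.Affine.Point.some _ _ h) = 2) ∧
    (W.Nonsingular ((t ^ 2 - 1) ^ 4) (4 * t ^ 2 * (t ^ 2 - 1) ^ 4 * (t ^ 2 + 1)) ∧
      ∀ h : W.Nonsingular ((t ^ 2 - 1) ^ 4) (4 * t ^ 2 * (t ^ 2 - 1) ^ 4 * (t ^ 2 + 1)),
        addOrderOf (WeierstrassCurve.Affine.Point.some _ _ h) = 3) ∧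
    (W.Nonsingular (-(t ^ 2 - 1) ^ 3 * (1 + 3 * t ^ 2))
        (8 * t ^ 3 * (t ^ 2 - 1) ^ 3 * (1 + 3 * t ^ 2)) ∧
      ∀ h : W.Nonsingular (-(t ^ 2 - 1) ^ 3 * (1 + 3 * t ^ 2))
          (8 * t ^ 3 * (t ^ 2 - 1) ^ 3 * (1 + 3 * t ^ 2)),
        addOrderOf (WeierstrassCurve.Affine.Point.some _ _ h) = 4) ∧
    (W.Nonsingular ((t ^ 2 - 1) ^ 2 * (1 + 3 * t ^ 2) ^ 2)
        (4 * t ^ 2 * (t ^ 2 - 1) ^ 2 * (t ^ 2 + 1) * (1 + 3 * t ^ 2) ^ 2) ∧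
      ∀ h : W.Nonsingular ((t ^ 2 - 1) ^ 2 * (1 + 3 * t ^ 2) ^ 2)
          (4 * t ^ 2 * (t ^ 2 - 1) ^ 2 * (t ^ 2 + 1) * (1 + 3 * t ^ 2) ^ 2),
        addOrderOf (WeierstrassCurve.Affine.Point.some _ _ h) = 6) := by
  intro a₁ b₁ W
  have ht0 : t ≠ 0 := ne_of_gt ht
  have h1 : t ^ 2 - 1 ≠ 0 := by
    intro h
    rcases mul_eq_zero.mp (show (t - 1) * (t + 1) = 0 by linear_combination h) with h' | h'
    · exact ht1 (by linarith)
    · linarith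
  have h2 : 1 + 3 * t ^ 2 ≠ 0 := by positivity
  have h3 : t ^ 2 + 1 ≠ 0 := by positivity
  have hb0 : b₁ ≠ 0 := mul_ne_zero (pow_ne_zero 6 h1) (pow_ne_zero 2 h2)
  -- nonsingularity of the four points
  have N2 : W.Nonsingular 0 0 := by
    rw [nonsingular_iff, equation_iff]
    exact ⟨by simp [W, Gamma], Or.inl (by
      simp only [W, Gamma]; intro h; exact hb0 (by linear_combination -h))⟩
  have y3ne : (4 * t ^ 2 * (t ^ 2 - 1) ^ 4 * (t ^ 2 + 1) : ℚ) ≠ 0 :=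
    mul_ne_zero (mul_ne_zero (by positivity) (pow_ne_zero 4 h1)) h3
  have N3 : W.Nonsingular ((t ^ 2 - 1) ^ 4) (4 * t ^ 2 * (t ^ 2 - 1) ^ 4 * (t ^ 2 + 1)) := by
    rw [nonsingular_iff, equation_iff]
    refine ⟨by simp only [W, Gamma, a₁, b₁]; ring, Or.inr ?_⟩
    simp only [W, Gamma]
    intro h
    exact y3ne (by linear_combination h / 2)
  have y4ne : (8 * t ^ 3 * (t ^ 2 - 1) ^ 3 * (1 + 3 * t ^ 2) : ℚ) ≠ 0 :=
    mul_ne_zero (mul_ne_zero (by positivity) (pow_ne_zero 3 h1)) h2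
  have N4 : W.Nonsingular (-(t ^ 2 - 1) ^ 3 * (1 + 3 * t ^ 2))
      (8 * t ^ 3 * (t ^ 2 - 1) ^ 3 * (1 + 3 * t ^ 2)) := by
    rw [nonsingular_iff, equation_iff]
    refine ⟨by simp only [W, Gamma, a₁, b₁]; ring, Or.inr ?_⟩
    simp only [W, Gamma]
    intro h
    exact y4ne (by linear_combination h / 2)
  have y6ne : (4 * t ^ 2 * (t ^ 2 - 1) ^ 2 * (t ^ 2 + 1) * (1 + 3 * t ^ 2) ^ 2 : ℚ) ≠ 0 :=
    mul_ne_zero (mul_ne_zero (mul_ne_zero (by positivity) (pow_ne_zero 2 h1)) h3)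
      (pow_ne_zero 2 h2)
  have N6 : W.Nonsingular ((t ^ 2 - 1) ^ 2 * (1 + 3 * t ^ 2) ^ 2)
      (4 * t ^ 2 * (t ^ 2 - 1) ^ 2 * (t ^ 2 + 1) * (1 + 3 * t ^ 2) ^ 2) := by
    rw [nonsingular_iff, equation_iff]
    refine ⟨by simp only [W, Gamma, a₁, b₁]; ring, Or.inr ?_⟩
    simp only [W, Gamma]
    intro h
    exact y6ne (by linear_combination h / 2)
  -- (0,0) has order 2
  have hord2 : addOrderOf (Point.some _ _ N2) = 2 := by
    have h22 : (2 : ℕ) • Point.some _ _ N2 = 0 := by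
      rw [two_smul]
      exact add_self_of_Y_eq (by simp [W, Gamma, negY])
    exact addOrderOf_eq_prime h22 (some_ne_zero N2)
  -- doubling of the order-3 point
  have hy3 : (4 * t ^ 2 * (t ^ 2 - 1) ^ 4 * (t ^ 2 + 1) : ℚ) ≠
      W.negY ((t ^ 2 - 1) ^ 4) (4 * t ^ 2 * (t ^ 2 - 1) ^ 4 * (t ^ 2 + 1)) := by
    simp only [W, Gamma, negY]
    intro h
    exact y3ne (by linear_combination h / 2)
  have hdbl3 : Point.some _ _ N3 + Point.some _ _ N3 = -Point.some _ _ N3 := by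
    rw [add_self_of_Y_ne hy3, neg_some]
    have hL : W.slope ((t ^ 2 - 1) ^ 4) ((t ^ 2 - 1) ^ 4)
        (4 * t ^ 2 * (t ^ 2 - 1) ^ 4 * (t ^ 2 + 1)) (4 * t ^ 2 * (t ^ 2 - 1) ^ 4 * (t ^ 2 + 1)) =
        (3 * ((t ^ 2 - 1) ^ 4) ^ 2
          + 2 * (2 * (3 * t ^ 8 + 24 * t ^ 6 + 6 * t ^ 4 - 1)) * (t ^ 2 - 1) ^ 4
          + (t ^ 2 - 1) ^ 6 * (1 + 3 * t ^ 2) ^ 2) /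
          (2 * (4 * t ^ 2 * (t ^ 2 - 1) ^ 4 * (t ^ 2 + 1))) := by
      rw [slope_of_Y_ne rfl hy3]
      simp only [W, Gamma, a₁, b₁, negY]
      ring_nf
    have hx : W.addX ((t ^ 2 - 1) ^ 4) ((t ^ 2 - 1) ^ 4)
        (W.slope ((t ^ 2 - 1) ^ 4) ((t ^ 2 - 1) ^ 4) (4 * t ^ 2 * (t ^ 2 - 1) ^ 4 * (t ^ 2 + 1))
          (4 * t ^ 2 * (t ^ 2 - 1) ^ 4 * (t ^ 2 + 1))) = (t ^ 2 - 1) ^ 4 := by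
      rw [hL]
      simp only [W, Gamma, a₁, b₁, addX]
      field_simp
      ring
    exact some_eq_some' hx (by rw [addY, negAddY, hx]; simp only [W, Gamma, negY]; ring) _ _
  have hord3 : addOrderOf (Point.some _ _ N3) = 3 := by
    have h33 : (3 : ℕ) • Point.some _ _ N3 = 0 := by
      rw [show (3 : ℕ) = 2 + 1 by rfl, succ_nsmul, two_smul, hdbl3, neg_add_cancel]
    exact addOrderOf_eq_prime h33 (some_ne_zero N3)
  -- doubling of the order-4 point gives (0,0)
  have hy4 : (8 * t ^ 3 * (t ^ 2 - 1) ^ 3 * (1 + 3 * t ^ 2) : ℚ) ≠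
      W.negY (-(t ^ 2 - 1) ^ 3 * (1 + 3 * t ^ 2))
        (8 * t ^ 3 * (t ^ 2 - 1) ^ 3 * (1 + 3 * t ^ 2)) := by
    simp only [W, Gamma, negY]
    intro h
    exact y4ne (by linear_combination h / 2)
  have hdbl4 : Point.some _ _ N4 + Point.some _ _ N4 = Point.some _ _ N2 := by
    rw [add_self_of_Y_ne hy4]
    have hL : W.slope (-(t ^ 2 - 1) ^ 3 * (1 + 3 * t ^ 2)) (-(t ^ 2 - 1) ^ 3 * (1 + 3 * t ^ 2))
        (8 * t ^ 3 * (t ^ 2 - 1) ^ 3 * (1 + 3 * t ^ 2))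
        (8 * t ^ 3 * (t ^ 2 - 1) ^ 3 * (1 + 3 * t ^ 2)) =
        (3 * (-(t ^ 2 - 1) ^ 3 * (1 + 3 * t ^ 2)) ^ 2
          + 2 * (2 * (3 * t ^ 8 + 24 * t ^ 6 + 6 * t ^ 4 - 1))
            * (-(t ^ 2 - 1) ^ 3 * (1 + 3 * t ^ 2))
          + (t ^ 2 - 1) ^ 6 * (1 + 3 * t ^ 2) ^ 2) /
          (2 * (8 * t ^ 3 * (t ^ 2 - 1) ^ 3 * (1 + 3 * t ^ 2))) := by
      rw [slope_of_Y_ne rfl hy4]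
      simp only [W, Gamma, a₁, b₁, negY]
      ring_nf
    have hx : W.addX (-(t ^ 2 - 1) ^ 3 * (1 + 3 * t ^ 2)) (-(t ^ 2 - 1) ^ 3 * (1 + 3 * t ^ 2))
        (W.slope (-(t ^ 2 - 1) ^ 3 * (1 + 3 * t ^ 2)) (-(t ^ 2 - 1) ^ 3 * (1 + 3 * t ^ 2))
          (8 * t ^ 3 * (t ^ 2 - 1) ^ 3 * (1 + 3 * t ^ 2))
          (8 * t ^ 3 * (t ^ 2 - 1) ^ 3 * (1 + 3 * t ^ 2))) = 0 := by
      rw [hL]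
      simp only [W, Gamma, a₁, b₁, addX]
      field_simp
      ring
    refine some_eq_some' hx ?_ _ _
    rw [addY, negAddY, hx, hL]
    simp only [W, Gamma, negY]
    field_simp
    ring
  have hord4 : addOrderOf (Point.some _ _ N4) = 4 := by
    have h24 : (2 : ℕ) • Point.some _ _ N4 = Point.some _ _ N2 := by rw [two_smul]; exact hdbl4
    have h44 : (2 : ℕ) ^ 2 • Point.some _ _ N4 = 0 := by
      rw [show (2 : ℕ) ^ 2 = 2 * 2 by rfl, mul_nsmul, h24, two_smul]
      exact add_self_of_Y_eq (by simp [W, Gamma, negY])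
    have := addOrderOf_eq_prime_pow (p := 2) (n := 1)
      (by rw [pow_one, h24]; exact some_ne_zero N2) (by rw [show 1 + 1 = 2 by rfl]; exact h44)
    rw [this]; norm_num
  -- (0,0) + order-3 point = negation of the order-6 point
  have hx23 : (0 : ℚ) ≠ (t ^ 2 - 1) ^ 4 := fun h => pow_ne_zero 4 h1 h.symm
  have hadd : Point.some _ _ N2 + Point.some _ _ N3 = -Point.some _ _ N6 := by
    rw [add_of_X_ne hx23, neg_some]
    have hL : W.slope 0 ((t ^ 2 - 1) ^ 4) 0 (4 * t ^ 2 * (t ^ 2 - 1) ^ 4 * (t ^ 2 + 1)) =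
        (0 - 4 * t ^ 2 * (t ^ 2 - 1) ^ 4 * (t ^ 2 + 1)) / (0 - (t ^ 2 - 1) ^ 4) :=
      slope_of_X_ne hx23
    have hx : W.addX 0 ((t ^ 2 - 1) ^ 4)
        (W.slope 0 ((t ^ 2 - 1) ^ 4) 0 (4 * t ^ 2 * (t ^ 2 - 1) ^ 4 * (t ^ 2 + 1))) =
        (t ^ 2 - 1) ^ 2 * (1 + 3 * t ^ 2) ^ 2 := by
      rw [hL]
      simp only [W, Gamma, a₁, b₁, addX]
      field_simp
      ring
    refine some_eq_some' hx ?_ _ _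
    rw [addY, negAddY, hx, hL]
    simp only [W, Gamma, negY]
    field_simp
    ring
  have hord6 : addOrderOf (Point.some _ _ N6) = 6 := by
    have hcomm : AddCommute (Point.some _ _ N2) (Point.some _ _ N3) := add_comm _ _
    have h23 : addOrderOf (Point.some _ _ N2 + Point.some _ _ N3) = 6 := by
      rw [hcomm.addOrderOf_add_eq_mul_addOrderOf_of_coprime (by rw [hord2, hord3]; norm_num),
        hord2, hord3]
    rw [← addOrderOf_neg, ← hadd, h23]
  exact ⟨⟨N2, fun h => hord2⟩, ⟨N3, fun h => hord3⟩, ⟨N4, fun h => hord4⟩,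
    ⟨N6, fun h => hord6⟩⟩
end

section
/- Let t ∈ ℚ with t > 0 and t ≠ 1, and let Γ_t be the Weierstrass curve y² = x³ + a₁·x² + b₁·x over ℚ with a₁ = 2·(3t⁸ + 24t⁶ + 6t⁴ − 1) and b₁ = (t² − 1)⁶·(1 + 3t²)². Then the point P = (−(t² − 1)·(t + 1)⁴·(1 + 3t²), 4t·(t² − 1)·(t + 1)⁴·(1 + t²)·(1 + 3t²)) lies on Γ_t and has order 12 in the group of ℚ-rational points of Γ_t. -/
open WeierstrassCurve.Affine in
lemma some_eq_some'_s10 {F : Type} [Field F] {W : WeierstrassCurve.Affine F} {x₁ y₁ x₂ y₂ : F}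
    (hx : x₁ = x₂) (hy : y₁ = y₂) (h₁ : W.Nonsingular x₁ y₁) :
    ∃ h₂ : W.Nonsingular x₂ y₂, Point.some _ _ h₁ = Point.some _ _ h₂ := by
  subst hx; subst hy; exact ⟨h₁, rfl⟩

set_option maxHeartbeats 4000000 in
/-- on the curve `Γ_t : y² = x³ + a₁x² + b₁x` with
`a₁ = 2(3t⁸ + 24t⁶ + 6t⁴ − 1)` and `b₁ = (t² − 1)⁶(1 + 3t²)²`, `t ∈ ℚ`, `t > 0`, `t ≠ 1`,
the point `P = (−(t²−1)(t+1)⁴(1+3t²), 4t(t²−1)(t+1)⁴(1+t²)(1+3t²))` lies on the curve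
and has order 12. -/
theorem stmt10 (t : ℚ) (ht : 0 < t) (ht1 : t ≠ 1) :
    let a₁ : ℚ := 2 * (3 * t ^ 8 + 24 * t ^ 6 + 6 * t ^ 4 - 1)
    let b₁ : ℚ := (t ^ 2 - 1) ^ 6 * (1 + 3 * t ^ 2) ^ 2
    let W : WeierstrassCurve.Affine ℚ := Gamma a₁ b₁
    W.Nonsingular (-((t ^ 2 - 1) * (t + 1) ^ 4 * (1 + 3 * t ^ 2)))
        (4 * t * (t ^ 2 - 1) * (t + 1) ^ 4 * (1 + t ^ 2) * (1 + 3 * t ^ 2)) ∧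
      ∀ h : W.Nonsingular (-((t ^ 2 - 1) * (t + 1) ^ 4 * (1 + 3 * t ^ 2)))
          (4 * t * (t ^ 2 - 1) * (t + 1) ^ 4 * (1 + t ^ 2) * (1 + 3 * t ^ 2)),
        addOrderOf (WeierstrassCurve.Affine.Point.some _ _ h) = 12 := by
  intro a₁ b₁ W
  open WeierstrassCurve.Affine in
  -- basic nonvanishing facts
  have ht0 : t ≠ 0 := ne_of_gt ht
  have htp1 : t + 1 ≠ 0 := by positivity
  have ht2 : t ^ 2 - 1 ≠ 0 := by
    have : (t - 1) * (t + 1) ≠ 0 := mul_ne_zero (sub_ne_zero.2 ht1) htp1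
    intro h; apply this; linear_combination h
  have hq1 : (1 : ℚ) + t ^ 2 ≠ 0 := by positivity
  have hq3 : (1 : ℚ) + 3 * t ^ 2 ≠ 0 := by positivity
  set x0 : ℚ := -((t ^ 2 - 1) * (t + 1) ^ 4 * (1 + 3 * t ^ 2)) with hx0
  set y0 : ℚ := 4 * t * (t ^ 2 - 1) * (t + 1) ^ 4 * (1 + t ^ 2) * (1 + 3 * t ^ 2) with hy0
  have hy0ne : y0 ≠ 0 := by
    rw [hy0]
    exact mul_ne_zero (mul_ne_zero (mul_ne_zero (mul_ne_zero
      (mul_ne_zero (by norm_num) ht0) ht2) (pow_ne_zero 4 htp1)) hq1) hq3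
  have hW1 : W.a₁ = 0 := rfl
  have hW2 : W.a₂ = a₁ := rfl
  have hW3 : W.a₃ = 0 := rfl
  have hW4 : W.a₄ = b₁ := rfl
  have hW6 : W.a₆ = 0 := rfl
  have ha : a₁ = 2 * (3 * t ^ 8 + 24 * t ^ 6 + 6 * t ^ 4 - 1) := rfl
  have hb : b₁ = (t ^ 2 - 1) ^ 6 * (1 + 3 * t ^ 2) ^ 2 := rfl
  have hP : W.Nonsingular x0 y0 := by
    rw [WeierstrassCurve.Affine.nonsingular_iff, WeierstrassCurve.Affine.equation_iff]
    simp only [WeierstrassCurve.Affine.negY, hW1, hW2, hW3, hW4, hW6]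
    constructor
    · rw [hx0, hy0, ha, hb]; ring
    · right
      intro hcon
      apply hy0ne
      linarith [hcon]
  refine ⟨hP, fun h => ?_⟩
  -- coordinates of multiples
  set x2 : ℚ := 9 * t ^ 8 - 12 * t ^ 6 - 2 * t ^ 4 + 4 * t ^ 2 + 1 with hx2
  set y2 : ℚ := -36 * t ^ 12 + 12 * t ^ 10 + 56 * t ^ 8 - 8 * t ^ 6 - 20 * t ^ 4 - 4 * t ^ 2
    with hy2
  set x3 : ℚ := -3 * t ^ 8 + 8 * t ^ 6 - 6 * t ^ 4 + 1 with hx3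
  set y3 : ℚ := 24 * t ^ 11 - 64 * t ^ 9 + 48 * t ^ 7 - 8 * t ^ 3 with hy3
  have hy2ne : y2 ≠ 0 := by
    have : -(4 * t ^ 2 * (t ^ 2 - 1) ^ 2 * (1 + 3 * t ^ 2) ^ 2 * (1 + t ^ 2)) ≠ 0 := by
      refine neg_ne_zero.2 (mul_ne_zero (mul_ne_zero (mul_ne_zero
        (mul_ne_zero (by norm_num) (pow_ne_zero 2 ht0)) (pow_ne_zero 2 ht2))
        (pow_ne_zero 2 hq3)) hq1)
    intro hcon; apply this; rw [← hcon, hy2]; ring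
  have hy3ne : y3 ≠ 0 := by
    have : 8 * t ^ 3 * (t ^ 2 - 1) ^ 3 * (1 + 3 * t ^ 2) ≠ 0 :=
      mul_ne_zero (mul_ne_zero (mul_ne_zero (by norm_num) (pow_ne_zero 3 ht0))
        (pow_ne_zero 3 ht2)) hq3
    intro hcon; apply this; rw [← hcon, hy3]; ring
  have hne0 : y0 ≠ W.negY x0 y0 := by
    simp only [WeierstrassCurve.Affine.negY, hW1, hW3]
    intro hcon; apply hy0ne; linarith [hcon]
  -- doubling: 2P
  set P : W.Point := WeierstrassCurve.Affine.Point.some _ _ h with hPdef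
  have hden0 : y0 - W.negY x0 y0 ≠ 0 := by
    have : y0 - W.negY x0 y0 = 2 * y0 := by
      simp only [WeierstrassCurve.Affine.negY, hW1, hW3]; ring
    rw [this]; exact mul_ne_zero two_ne_zero hy0ne
  have hs1 : W.slope x0 x0 y0 y0 = 3 * t ^ 4 - 4 * t ^ 3 - 2 * t ^ 2 - 4 * t - 1 := by
    rw [W.slope_of_Y_ne rfl hne0, div_eq_iff hden0]
    simp only [WeierstrassCurve.Affine.negY, hW1, hW2, hW3, hW4]
    rw [hx0, hy0, ha, hb]; ring
  obtain ⟨h2, e2⟩ : ∃ h2 : W.Nonsingular x2 y2, P + P = WeierstrassCurve.Affine.Point.some _ _ h2 := by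
    rw [hPdef, WeierstrassCurve.Affine.Point.add_self_of_Y_ne hne0]
    refine some_eq_some'_s10 ?_ ?_ _
    · simp only [hs1, WeierstrassCurve.Affine.addX, hW1, hW2]
      rw [hx0, ha, hx2]; ring
    · simp only [hs1, WeierstrassCurve.Affine.addY, WeierstrassCurve.Affine.negAddY,
        WeierstrassCurve.Affine.addX, WeierstrassCurve.Affine.negY, hW1, hW2, hW3]
      rw [hx0, hy0, ha, hy2]; ring
  -- 2P + P = 3P
  have hx20 : x2 ≠ x0 := by
    have key : x2 - x0 = 4 * t * (t ^ 2 - 1) * (t ^ 2 + 1) * (1 + t) * (1 + 3 * t ^ 2) := by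
      rw [hx2, hx0]; ring
    intro hcon
    have : x2 - x0 = 0 := by rw [hcon]; ring
    rw [key] at this
    exact (mul_ne_zero (mul_ne_zero (mul_ne_zero (mul_ne_zero
      (mul_ne_zero (by norm_num) ht0) ht2) (by positivity)) (by linarith)) hq3) this
  have hs2 : W.slope x2 x0 y2 y0 = -3 * t ^ 4 + 2 * t ^ 3 - 4 * t ^ 2 - 2 * t - 1 := by
    rw [W.slope_of_X_ne hx20, div_eq_iff (sub_ne_zero.2 hx20)]
    rw [hx0, hy0, hx2, hy2]; ring
  obtain ⟨h3, e3⟩ : ∃ h3 : W.Nonsingular x3 y3,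
      WeierstrassCurve.Affine.Point.some _ _ h2 + P = WeierstrassCurve.Affine.Point.some _ _ h3 := by
    rw [hPdef, WeierstrassCurve.Affine.Point.add_of_X_ne hx20]
    refine some_eq_some'_s10 ?_ ?_ _
    · simp only [hs2, WeierstrassCurve.Affine.addX, hW1, hW2]
      rw [hx0, hx2, ha, hx3]; ring
    · simp only [hs2, WeierstrassCurve.Affine.addY, WeierstrassCurve.Affine.negAddY,
        WeierstrassCurve.Affine.addX, WeierstrassCurve.Affine.negY, hW1, hW2, hW3]
      rw [hx0, hx2, hy2, ha, hy3]; ring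
  -- 3P + 3P = 6P = (0,0)
  have hne3 : y3 ≠ W.negY x3 y3 := by
    simp only [WeierstrassCurve.Affine.negY, hW1, hW3]
    intro hcon; apply hy3ne; linarith [hcon]
  have hden3 : y3 - W.negY x3 y3 ≠ 0 := by
    have : y3 - W.negY x3 y3 = 2 * y3 := by
      simp only [WeierstrassCurve.Affine.negY, hW1, hW3]; ring
    rw [this]; exact mul_ne_zero two_ne_zero hy3ne
  have hs3 : W.slope x3 x3 y3 y3 = -8 * t ^ 3 := by
    rw [W.slope_of_Y_ne rfl hne3, div_eq_iff hden3]
    simp only [WeierstrassCurve.Affine.negY, hW1, hW2, hW3, hW4]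
    rw [hx3, hy3, ha, hb]; ring
  obtain ⟨h00, e6⟩ : ∃ h00 : W.Nonsingular 0 0,
      WeierstrassCurve.Affine.Point.some _ _ h3 + WeierstrassCurve.Affine.Point.some _ _ h3 =
        WeierstrassCurve.Affine.Point.some _ _ h00 := by
    rw [WeierstrassCurve.Affine.Point.add_self_of_Y_ne hne3]
    refine some_eq_some'_s10 ?_ ?_ _
    · simp only [hs3, WeierstrassCurve.Affine.addX, hW1, hW2]
      rw [hx3, ha]; ring
    · simp only [hs3, WeierstrassCurve.Affine.addY, WeierstrassCurve.Affine.negAddY,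
        WeierstrassCurve.Affine.addX, WeierstrassCurve.Affine.negY, hW1, hW2, hW3]
      rw [hx3, hy3, ha]; ring
  -- (0,0) is 2-torsion
  have e00 : WeierstrassCurve.Affine.Point.some _ _ h00 + WeierstrassCurve.Affine.Point.some _ _ h00 =
      0 := by
    refine WeierstrassCurve.Affine.Point.add_of_Y_eq rfl ?_
    simp only [WeierstrassCurve.Affine.negY, hW1, hW3]; ring
  -- hne2 for 4P ≠ 0
  have hne2 : y2 ≠ W.negY x2 y2 := by
    simp only [WeierstrassCurve.Affine.negY, hW1, hW3]
    intro hcon; apply hy2ne; linarith [hcon]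
  -- nsmul computations
  have e2' : 2 • P = WeierstrassCurve.Affine.Point.some _ _ h2 := by rw [two_nsmul]; exact e2
  have e3' : 3 • P = WeierstrassCurve.Affine.Point.some _ _ h3 := by
    have : (3 : ℕ) = 2 + 1 := rfl
    rw [this, succ_nsmul, e2']; exact e3
  have e6' : 6 • P = WeierstrassCurve.Affine.Point.some _ _ h00 := by
    have : (6 : ℕ) • P = 2 • (3 • P) := by rw [← mul_nsmul]
    rw [this, e3', two_nsmul]; exact e6
  have e12 : 12 • P = 0 := by
    have : (12 : ℕ) • P = 2 • (6 • P) := by rw [← mul_nsmul]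
    rw [this, e6', two_nsmul]; exact e00
  have h6ne : 6 • P ≠ 0 := by
    rw [e6']; exact WeierstrassCurve.Affine.Point.some_ne_zero _
  have h4ne : 4 • P ≠ 0 := by
    have : (4 : ℕ) • P = 2 • (2 • P) := by rw [← mul_nsmul]
    rw [this, e2', two_nsmul, WeierstrassCurve.Affine.Point.add_self_of_Y_ne hne2]
    exact WeierstrassCurve.Affine.Point.some_ne_zero _
  -- conclude
  have hd : addOrderOf P ∣ 12 := addOrderOf_dvd_of_nsmul_eq_zero e12
  have h6 : ¬ addOrderOf P ∣ 6 := fun hc => h6ne (addOrderOf_dvd_iff_nsmul_eq_zero.mp hc)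
  have h4 : ¬ addOrderOf P ∣ 4 := fun hc => h4ne (addOrderOf_dvd_iff_nsmul_eq_zero.mp hc)
  set n := addOrderOf P with hn
  have hnpos : 0 < n := Nat.pos_of_dvd_of_pos hd (by norm_num)
  have hnle : n ≤ 12 := Nat.le_of_dvd (by norm_num) hd
  interval_cases n <;> first | rfl | (exfalso; revert hd h6 h4; decide)
end

section
/- Let t ∈ ℚ with t ∉ {−1, 0, 1}, set a₁ := 2·(3t⁸ + 24t⁶ + 6t⁴ − 1), b₁ := (t² − 1)⁶·(1 + 3t²)², and x₁ := −(t + 1)²·(t − 1)⁶. Then there exists y₁ ∈ ℚ with y₁² = x₁³ + a₁·x₁² + b₁·x₁ (i.e. x₁ is the x-coordinate of a rational point on Γ_t) if and only if there exists v ∈ ℚ with v² = −(t⁴ + 8t³ + 2t² + 1). -/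
/-- for `t ∈ ℚ \ {−1, 0, 1}` and `x₁ = −(t+1)²(t−1)⁶`, the value
`x₁³ + a₁x₁² + b₁x₁` (with `a₁ = 2(3t⁸ + 24t⁶ + 6t⁴ − 1)`, `b₁ = (t² − 1)⁶(1 + 3t²)²`)
is a rational square if and only if `−(t⁴ + 8t³ + 2t² + 1)` is a rational square. -/
theorem stmt11 (t : ℚ) (ht0 : t ≠ 0) (ht1 : t ≠ 1) (ht1' : t ≠ -1) :
    let a₁ : ℚ := 2 * (3 * t ^ 8 + 24 * t ^ 6 + 6 * t ^ 4 - 1)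
    let b₁ : ℚ := (t ^ 2 - 1) ^ 6 * (1 + 3 * t ^ 2) ^ 2
    let x₁ : ℚ := -((t + 1) ^ 2 * (t - 1) ^ 6)
    (∃ y₁ : ℚ, y₁ ^ 2 = x₁ ^ 3 + a₁ * x₁ ^ 2 + b₁ * x₁) ↔
      (∃ v : ℚ, v ^ 2 = -(t ^ 4 + 8 * t ^ 3 + 2 * t ^ 2 + 1)) := by
  have h1 : t - 1 ≠ 0 := sub_ne_zero.mpr ht1
  have h2 : t + 1 ≠ 0 := fun h => ht1' (by linarith)
  have h3 : (t ^ 2 + 1 : ℚ) ≠ 0 := by positivity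
  have hc : (2 * (t - 1) ^ 6 * (t + 1) ^ 2 * (t ^ 2 + 1) : ℚ) ≠ 0 := by
    apply mul_ne_zero (mul_ne_zero (mul_ne_zero (by norm_num) (pow_ne_zero _ h1))
      (pow_ne_zero _ h2)) h3
  intro a₁ b₁ x₁
  have key : x₁ ^ 3 + a₁ * x₁ ^ 2 + b₁ * x₁ =
      (2 * (t - 1) ^ 6 * (t + 1) ^ 2 * (t ^ 2 + 1)) ^ 2 *
        (-(t ^ 4 + 8 * t ^ 3 + 2 * t ^ 2 + 1)) := by
    simp only [a₁, b₁, x₁]; ring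
  rw [key]
  constructor
  · rintro ⟨y, hy⟩
    refine ⟨y / (2 * (t - 1) ^ 6 * (t + 1) ^ 2 * (t ^ 2 + 1)), ?_⟩
    rw [div_pow, hy, mul_comm, mul_div_assoc, div_self (pow_ne_zero 2 hc), mul_one]
  · rintro ⟨v, hv⟩
    exact ⟨2 * (t - 1) ^ 6 * (t + 1) ^ 2 * (t ^ 2 + 1) * v, by rw [mul_pow, hv]⟩
end

section
/- Let t ∈ ℚ with t ∉ {−1, 0, 1}, set a₁ := 2·(3t⁸ + 24t⁶ + 6t⁴ − 1), b₁ := (t² − 1)⁶·(1 + 3t²)², and x₂ := (t + 1)⁸. Then there exists y₂ ∈ ℚ with y₂² = x₂³ + a₁·x₂² + b₁·x₂ (i.e. x₂ is the x-coordinate of a rational point on Γ_t) if and only if there exists v ∈ ℚ with v² = t⁴ − 2t³ + 13t² + 4t + 4. -/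
/-- for `t ∈ ℚ \ {−1, 0, 1}` and `x₂ = (t+1)⁸`, the value
`x₂³ + a₁x₂² + b₁x₂` (with `a₁ = 2(3t⁸ + 24t⁶ + 6t⁴ − 1)`, `b₁ = (t² − 1)⁶(1 + 3t²)²`)
is a rational square if and only if `t⁴ − 2t³ + 13t² + 4t + 4` is a rational square. -/
theorem stmt12 (t : ℚ) (ht0 : t ≠ 0) (ht1 : t ≠ 1) (ht1' : t ≠ -1) :
    let a₁ : ℚ := 2 * (3 * t ^ 8 + 24 * t ^ 6 + 6 * t ^ 4 - 1)
    let b₁ : ℚ := (t ^ 2 - 1) ^ 6 * (1 + 3 * t ^ 2) ^ 2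
    let x₂ : ℚ := (t + 1) ^ 8
    (∃ y₂ : ℚ, y₂ ^ 2 = x₂ ^ 3 + a₁ * x₂ ^ 2 + b₁ * x₂) ↔
      (∃ v : ℚ, v ^ 2 = t ^ 4 - 2 * t ^ 3 + 13 * t ^ 2 + 4 * t + 4) := by
  intro a₁ b₁ x₂
  have htp1 : t + 1 ≠ 0 := fun h => ht1' (by linarith)
  have ht2 : t ^ 2 + 1 ≠ 0 := by positivity
  have hc : (4 * t * (t + 1) ^ 7 * (t ^ 2 + 1) : ℚ) ≠ 0 := by
    simp [ht0, htp1, ht2, pow_eq_zero_iff]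
  have key : x₂ ^ 3 + a₁ * x₂ ^ 2 + b₁ * x₂ =
      (4 * t * (t + 1) ^ 7 * (t ^ 2 + 1)) ^ 2 *
        (t ^ 4 - 2 * t ^ 3 + 13 * t ^ 2 + 4 * t + 4) := by
    simp only [a₁, b₁, x₂]; ring
  constructor
  · rintro ⟨y, hy⟩
    refine ⟨y / (4 * t * (t + 1) ^ 7 * (t ^ 2 + 1)), ?_⟩
    field_simp
    rw [hy, key]; ring
  · rintro ⟨v, hv⟩
    exact ⟨4 * t * (t + 1) ^ 7 * (t ^ 2 + 1) * v, by rw [key, ← hv]; ring⟩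
end

section
/- Let t ∈ ℚ with t ∉ {−1, 0, 1}, set a₁ := 2·(3t⁸ + 24t⁶ + 6t⁴ − 1), b₁ := (t² − 1)⁶·(1 + 3t²)², and x₃ := (3/4)·(t + 1)⁴·(t − 1)⁴. Then there exists y₃ ∈ ℚ with y₃² = x₃³ + a₁·x₃² + b₁·x₃ (i.e. x₃ is the x-coordinate of a rational point on Γ_t) if and only if there exists v ∈ ℚ with v² = 75t⁴ + 66t² + 3. -/
/-- for `t ∈ ℚ \ {−1, 0, 1}` and `x₃ = (3/4)(t+1)⁴(t−1)⁴`, the value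
`x₃³ + a₁x₃² + b₁x₃` (with `a₁ = 2(3t⁸ + 24t⁶ + 6t⁴ − 1)`, `b₁ = (t² − 1)⁶(1 + 3t²)²`)
is a rational square if and only if `75t⁴ + 66t² + 3` is a rational square. -/
theorem stmt13 (t : ℚ) (ht0 : t ≠ 0) (ht1 : t ≠ 1) (ht1' : t ≠ -1) :
    let a₁ : ℚ := 2 * (3 * t ^ 8 + 24 * t ^ 6 + 6 * t ^ 4 - 1)
    let b₁ : ℚ := (t ^ 2 - 1) ^ 6 * (1 + 3 * t ^ 2) ^ 2
    let x₃ : ℚ := (3 / 4) * (t + 1) ^ 4 * (t - 1) ^ 4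
    (∃ y₃ : ℚ, y₃ ^ 2 = x₃ ^ 3 + a₁ * x₃ ^ 2 + b₁ * x₃) ↔
      (∃ v : ℚ, v ^ 2 = 75 * t ^ 4 + 66 * t ^ 2 + 3) := by
  intro a₁ b₁ x₃
  have h1 : t ^ 2 - 1 ≠ 0 := by
    intro h
    have : (t - 1) * (t + 1) = 0 := by linear_combination h
    rcases mul_eq_zero.mp this with h' | h'
    · exact ht1 (by linarith)
    · exact ht1' (by linarith)
  have h2 : (3 : ℚ) * t ^ 2 + 1 ≠ 0 := by positivity
  have hc : (t ^ 2 - 1) ^ 4 * (3 * t ^ 2 + 1) ≠ 0 :=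
    mul_ne_zero (pow_ne_zero _ h1) h2
  constructor
  · rintro ⟨y, hy⟩
    refine ⟨8 * y / ((t ^ 2 - 1) ^ 4 * (3 * t ^ 2 + 1)), ?_⟩
    rw [div_pow, div_eq_iff (pow_ne_zero _ hc)]
    simp only [a₁, b₁, x₃] at hy
    ring_nf
    ring_nf at hy
    linear_combination 64 * hy
  · rintro ⟨v, hv⟩
    refine ⟨v * ((t ^ 2 - 1) ^ 4 * (3 * t ^ 2 + 1)) / 8, ?_⟩
    simp only [a₁, b₁, x₃]
    rw [div_pow, div_eq_iff (by norm_num : ((8:ℚ)) ^ 2 ≠ 0)]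
    linear_combination ((t ^ 2 - 1) ^ 4 * (3 * t ^ 2 + 1)) ^ 2 * hv
end
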